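/- arXiv:2006.07542 — 2 statements merged into one kernel-verified Lean document; each statement's English description precedes it below -/
import Mathlib

section
/- If T: V → U(m) is an operator solution of a linear constraint system Mx = b over ℤ/d, then applying the determinant and taking the ℤ/d-valued logarithm yields a scalar solution of the system M x = m·b over ℤ/d; in particular, det(T(v_1))^{M_{k1}} ⋯ det(T(v_c))^{M_{kc}} = e^{2πi m b_k/d} for all k. -/
open Matrix
open scoped Real

/-- taking determinants of an operator solution over `U(m)` of a
linear constraint system `Mx = b` over `ℤ/d` yields a scalar solution of
`Mx = m·b`: each determinant is a `d`-th root of unity and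
`det(A_1)^{M_{k1}} ⋯ det(A_c)^{M_{kc}} = e^{2πi m b_k / d}` for all `k`. -/
theorem det_of_operator_solution (d r c m : ℕ) (hd : 0 < d) (hm : 0 < m)
    (M : Matrix (Fin r) (Fin c) (ZMod d)) (b : Fin r → ZMod d)
    (A : Fin c → Matrix.unitaryGroup (Fin m) ℂ)
    (htor : ∀ i, (A i : Matrix (Fin m) (Fin m) ℂ) ^ d = 1)
    (hcomm : ∀ k i j, M k i ≠ 0 → M k j ≠ 0 →
      Commute (A i : Matrix (Fin m) (Fin m) ℂ) (A j : Matrix (Fin m) (Fin m) ℂ))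
    (hsol : ∀ k, ((List.finRange c).map
        (fun i => (A i : Matrix (Fin m) (Fin m) ℂ) ^ (M k i).val)).prod =
      Complex.exp (2 * π * Complex.I * (b k).val / d) • 1) :
    (∀ i, ((A i : Matrix (Fin m) (Fin m) ℂ).det) ^ d = 1) ∧
    (∀ k, ∏ i, ((A i : Matrix (Fin m) (Fin m) ℂ).det) ^ (M k i).val =
      Complex.exp (2 * π * Complex.I * (m * (b k).val) / d)) := by
  constructor
  · intro i
    rw [← Matrix.det_pow, htor i, Matrix.det_one]
  · intro k
    have h := congrArg Matrix.det (hsol k)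
    rw [← Matrix.coe_detMonoidHom, MonoidHom.map_list_prod, List.map_map] at h
    simp only [Function.comp_def, Matrix.coe_detMonoidHom, Matrix.det_smul, Matrix.det_pow,
      Matrix.det_mul, Matrix.det_one, Matrix.det_diagonal,
      Finset.prod_const, Finset.card_univ, Fintype.card_fin, mul_one] at h
    rw [Fin.prod_univ_def, h, ← Complex.exp_nat_mul]
    congr 1
    push_cast
    ring
end

section
/- If a linear constraint system Mx = b over ℤ/d admits an operator solution over U(m) and gcd(d,m) = 1, then it admits a scalar solution. -/
open Matrix
open scoped Real

/-- if a linear constraint system `Mx = b` over `ℤ/d` admits an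
operator solution over `U(m)` and `gcd(d,m) = 1`, then it admits a scalar
solution. -/
theorem scalar_solution_of_coprime_operator_solution (d r c m : ℕ)
    (hd : 0 < d) (hm : 0 < m) (hcop : Nat.Coprime d m)
    (M : Matrix (Fin r) (Fin c) (ZMod d)) (b : Fin r → ZMod d)
    (A : Fin c → Matrix.unitaryGroup (Fin m) ℂ)
    (htor : ∀ i, (A i : Matrix (Fin m) (Fin m) ℂ) ^ d = 1)
    (hcomm : ∀ k i j, M k i ≠ 0 → M k j ≠ 0 →
      Commute (A i : Matrix (Fin m) (Fin m) ℂ) (A j : Matrix (Fin m) (Fin m) ℂ))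
    (hsol : ∀ k, ((List.finRange c).map
        (fun i => (A i : Matrix (Fin m) (Fin m) ℂ) ^ (M k i).val)).prod =
      Complex.exp (2 * π * Complex.I * (b k).val / d) • 1) :
    ∃ α : Fin c → ℂ, (∀ i, α i ^ d = 1) ∧
      ∀ k, ∏ i, α i ^ (M k i).val =
        Complex.exp (2 * π * Complex.I * (b k).val / d) := by
  classical
  haveI : NeZero d := ⟨hd.ne'⟩
  set n := ((m : ZMod d)⁻¹).val with hn
  have hdC : (d : ℂ) ≠ 0 := Nat.cast_ne_zero.mpr hd.ne'
  -- m * n ≡ 1 mod d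
  have hmn : ((m * n : ℕ) : ZMod d) = ((1 : ℕ) : ZMod d) := by
    push_cast
    rw [hn, ZMod.natCast_val, ZMod.cast_id]
    exact ZMod.coe_mul_inv_eq_one m hcop.symm
  have hmodeq : (m * n) % d = 1 % d := (ZMod.natCast_eq_natCast_iff _ _ _).mp hmn
  obtain ⟨t, ht⟩ : ∃ t : ℤ, ((m : ℤ) * n) = 1 + d * t := by
    obtain ⟨t, ht⟩ := (Nat.modEq_iff_dvd).mp hmodeq
    exact ⟨-t, by push_cast at ht ⊢; linarith⟩
  -- determinants
  set β : Fin c → ℂ := fun i => ((A i : Matrix (Fin m) (Fin m) ℂ)).det with hβ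
  have hβd : ∀ i, β i ^ d = 1 := by
    intro i
    have := congrArg Matrix.det (htor i)
    simpa [Matrix.det_pow] using this
  have hβsol : ∀ k, ∏ i, β i ^ (M k i).val =
      Complex.exp (2 * π * Complex.I * (b k).val / d) ^ m := by
    intro k
    have := congrArg Matrix.det (hsol k)
    rw [← Matrix.coe_detMonoidHom, MonoidHom.map_list_prod, List.map_map] at this
    rw [Fin.prod_univ_def]
    simpa [Matrix.coe_detMonoidHom, Function.comp_def, hβ, Matrix.det_pow,
      Matrix.smul_one_eq_diagonal, Matrix.det_diagonal] using this
  refine ⟨fun i => β i ^ n, fun i => ?_, fun k => ?_⟩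
  · rw [← pow_mul, mul_comm, pow_mul, hβd, one_pow]
  · have key : ∏ i, (β i ^ n) ^ (M k i).val =
        Complex.exp (2 * π * Complex.I * (b k).val / d) ^ (m * n) := by
      rw [pow_mul, ← hβsol k, ← Finset.prod_pow]
      congr 1; ext i
      rw [← pow_mul, ← pow_mul, mul_comm]
    rw [key]
    set e := Complex.exp (2 * π * Complex.I * (b k).val / d) with he
    have hend : e ^ d = 1 := by
      rw [he, ← Complex.exp_nat_mul]
      have : (d : ℂ) * (2 * π * Complex.I * (b k).val / d) =
          ((b k).val : ℤ) * (2 * π * Complex.I) := by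
        push_cast; field_simp
      rw [this, Complex.exp_int_mul_two_pi_mul_I]
    have hene : e ≠ 0 := Complex.exp_ne_zero _
    have : (e : ℂ) ^ ((m * n : ℕ) : ℤ) = e := by
      push_cast
      rw [ht, zpow_add₀ hene, zpow_one, _root_.zpow_mul, zpow_natCast, hend, _root_.one_zpow, mul_one]
    exact (zpow_natCast e (m * n)).symm.trans this
end
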